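/- Let $h \sim \mathcal{CN}(0,1)$ and, conditioned on $h$, let $n' \sim \mathcal{CN}(0, N/|h|^2)$ for some $N > 0$. Fix $\delta \in (0,1)$ and suppose $\sqrt{1+\delta} > 1$. Then $\Pr(|n'| + 1 \geq \sqrt{1+\delta}) + \Pr(|1 - |n'|| \leq \sqrt{1-\delta})$ equals $\left(1+\tfrac{(\sqrt{1+\delta}-1)^2}{N}\right)^{-1} + \left(1+\tfrac{(1-\sqrt{1-\delta})^2}{N}\right)^{-1} - \left(1+\tfrac{(\sqrt{1-\delta}+1)^2}{N}\right)^{-1}$, where probabilities are taken over both $n'$ and $h$. -/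

import Mathlib

open MeasureTheory ProbabilityTheory Real Set
open scoped ENNReal

/-- The circularly-symmetric complex Gaussian measure `CN(0, v)` on `ℂ`. -/
noncomputable def complexGaussian (v : ℝ) : Measure ℂ :=
  ((gaussianReal 0 (v / 2).toNNReal).prod (gaussianReal 0 (v / 2).toNNReal)).map
    Complex.measurableEquivRealProd.symm

/-- Joint law of `(h, n')` where `h ~ CN(0,1)` and, conditionally on `h`,
`n' ~ CN(0, N/|h|²)`. -/
noncomputable def fadedNoisePair (N : ℝ) : Measure (ℂ × ℂ) :=
  (complexGaussian 1).bind
    (fun h => (complexGaussian (N / ‖h‖ ^ 2)).map (fun n => (h, n)))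

instance complexGaussian.instIsProbabilityMeasure (v : ℝ) :
    IsProbabilityMeasure (complexGaussian v) := by
  unfold complexGaussian
  exact Measure.isProbabilityMeasure_map (Complex.measurableEquivRealProd.symm.measurable.aemeasurable)

lemma prod_withDensity' {α β : Type*} [MeasurableSpace α] [MeasurableSpace β]
    (μ : Measure α) (ν : Measure β) [SigmaFinite μ] [SigmaFinite ν]
    {f : α → ℝ≥0∞} {g : β → ℝ≥0∞} (hf : Measurable f) (hg : Measurable g)
    [SigmaFinite (μ.withDensity f)] [SigmaFinite (ν.withDensity g)] :
    (μ.withDensity f).prod (ν.withDensity g)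
      = (μ.prod ν).withDensity (fun p => f p.1 * g p.2) := by
  refine (Measure.prod_eq fun s t hs ht => ?_)
  rw [withDensity_apply _ (hs.prod ht), ← Measure.prod_restrict,
    lintegral_prod_mul hf.aemeasurable hg.aemeasurable,
    withDensity_apply _ hs, withDensity_apply _ ht]

lemma complexGaussian_eq_map (v : ℝ) (hv : 0 ≤ v) :
    complexGaussian v = (complexGaussian 1).map (fun z => (Real.sqrt v : ℂ) * z) := by
  have hg : gaussianReal 0 (v / 2).toNNReal
      = (gaussianReal 0 ((1:ℝ) / 2).toNNReal).map (fun x => Real.sqrt v * x) := by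
    rw [gaussianReal_map_const_mul]
    congr 1
    · simp
    · ext
      push_cast
      rw [Real.sq_sqrt hv]
      rw [Real.coe_toNNReal _ (by positivity), Real.coe_toNNReal _ (by norm_num)]
      ring
  have hfun : (⇑Complex.measurableEquivRealProd.symm ∘
        Prod.map (fun x => Real.sqrt v * x) (fun x => Real.sqrt v * x))
      = (fun z => (Real.sqrt v : ℂ) * z) ∘ ⇑Complex.measurableEquivRealProd.symm := by
    funext p
    have h1 : ∀ q : ℝ × ℝ, Complex.measurableEquivRealProd.symm q = q.1 + q.2 * Complex.I :=
      fun q => Complex.equivRealProd_symm_apply q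
    simp only [Function.comp_apply, Prod.map_apply, h1, Prod.map_fst, Prod.map_snd]
    push_cast
    ring
  unfold complexGaussian
  rw [hg, Measure.map_prod_map _ _ (measurable_const_mul _) (measurable_const_mul _),
    Measure.map_map Complex.measurableEquivRealProd.symm.measurable (by fun_prop),
    hfun, ← Measure.map_map (by fun_prop) Complex.measurableEquivRealProd.symm.measurable]

lemma complexGaussian_one_radial {A : Set ℝ} (hA : MeasurableSet A) :
    complexGaussian 1 {z : ℂ | ‖z‖ ∈ A}
      = ENNReal.ofReal (∫ r in A ∩ Set.Ioi (0:ℝ), 2 * r * Real.exp (-r ^ 2)) := by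
  set σ : NNReal := ((1:ℝ) / 2).toNNReal with hσdef
  have hσ : σ ≠ 0 := by
    simp [hσdef, Real.toNNReal_eq_zero]
  have hσc : (σ : ℝ) = 1 / 2 := Real.coe_toNNReal _ (by norm_num)
  have hSz : MeasurableSet {z : ℂ | ‖z‖ ∈ A} :=
    continuous_norm.measurable hA
  have habs : ∀ p : ℝ × ℝ,
      ‖Complex.measurableEquivRealProd.symm p‖ = Real.sqrt (p.1 ^ 2 + p.2 ^ 2) := by
    intro p
    rw [Complex.norm_def, Complex.normSq_apply]
    have h1 : (Complex.measurableEquivRealProd.symm p).re = p.1 := rfl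
    have h2 : (Complex.measurableEquivRealProd.symm p).im = p.2 := rfl
    rw [h1, h2]; ring_nf
  set T : Set (ℝ × ℝ) := {p : ℝ × ℝ | Real.sqrt (p.1 ^ 2 + p.2 ^ 2) ∈ A} with hTdef
  have hT : MeasurableSet T := by
    have : Measurable fun p : ℝ × ℝ => Real.sqrt (p.1 ^ 2 + p.2 ^ 2) := by fun_prop
    exact this hA
  have hpre : ⇑Complex.measurableEquivRealProd.symm ⁻¹' {z : ℂ | ‖z‖ ∈ A} = T := by
    ext p
    simp only [mem_preimage, mem_setOf_eq, habs p, hTdef]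
  have hsf : SigmaFinite (volume.withDensity (gaussianPDF 0 σ)) := by
    rw [← gaussianReal_of_var_ne_zero _ hσ]; infer_instance
  unfold complexGaussian
  rw [Measure.map_apply Complex.measurableEquivRealProd.symm.measurable hSz, hpre]
  rw [show ((1:ℝ)/2).toNNReal = σ from rfl]
  rw [gaussianReal_of_var_ne_zero _ hσ,
    prod_withDensity' _ _ (measurable_gaussianPDF 0 σ) (measurable_gaussianPDF 0 σ),
    withDensity_apply _ hT, ← Measure.volume_eq_prod]
  have hg_nonneg : ∀ x, 0 ≤ gaussianPDFReal 0 σ x := gaussianPDFReal_nonneg 0 σ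
  have hstep : ∀ p : ℝ × ℝ, gaussianPDF 0 σ p.1 * gaussianPDF 0 σ p.2
      = ENNReal.ofReal (gaussianPDFReal 0 σ p.1 * gaussianPDFReal 0 σ p.2) := by
    intro p
    rw [gaussianPDF, gaussianPDF, ← ENNReal.ofReal_mul (hg_nonneg _)]
  simp_rw [hstep]
  rw [← lintegral_indicator hT]
  have hind : ∀ p : ℝ × ℝ, T.indicator
        (fun p => ENNReal.ofReal (gaussianPDFReal 0 σ p.1 * gaussianPDFReal 0 σ p.2)) p
      = ENNReal.ofReal (T.indicator
        (fun p => gaussianPDFReal 0 σ p.1 * gaussianPDFReal 0 σ p.2) p) := by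
    intro p
    by_cases hp : p ∈ T <;> simp [Set.indicator_apply, hp]
  simp_rw [hind]
  have hint : Integrable
      (T.indicator fun p : ℝ × ℝ => gaussianPDFReal 0 σ p.1 * gaussianPDFReal 0 σ p.2) volume := by
    rw [Measure.volume_eq_prod]
    exact ((integrable_gaussianPDFReal 0 σ).mul_prod (integrable_gaussianPDFReal 0 σ)).indicator hT
  rw [← ofReal_integral_eq_lintegral_ofReal hint
    (ae_of_all _ fun p => Set.indicator_nonneg (fun q _ => mul_nonneg (hg_nonneg _) (hg_nonneg _)) p)]
  congr 1
  rw [← integral_comp_polarCoord_symm]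
  have htarget :
      ∫ p in polarCoord.target,
        p.1 • (T.indicator (fun p => gaussianPDFReal 0 σ p.1 * gaussianPDFReal 0 σ p.2))
          (polarCoord.symm p)
      = ∫ p in polarCoord.target,
          (fun r => Set.indicator (A ∩ Ioi 0) (fun r => r * (π⁻¹ * Real.exp (-r ^ 2))) r) p.1
            * (fun _ : ℝ => (1:ℝ)) p.2 := by
    apply setIntegral_congr_fun (polarCoord.open_target.measurableSet)
    intro p hp
    rw [polarCoord_target] at hp
    obtain ⟨hp1, _⟩ := hp
    simp only [polarCoord_symm_apply, smul_eq_mul]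
    have hxy : (p.1 * Real.cos p.2) ^ 2 + (p.1 * Real.sin p.2) ^ 2 = p.1 ^ 2 := by
      have := Real.sin_sq_add_cos_sq p.2
      nlinarith [this]
    have hsq : Real.sqrt ((p.1 * Real.cos p.2) ^ 2 + (p.1 * Real.sin p.2) ^ 2) = p.1 := by
      rw [hxy]; exact Real.sqrt_sq (le_of_lt hp1)
    by_cases hmem : p.1 ∈ A
    · rw [Set.indicator_of_mem, Set.indicator_of_mem (by exact ⟨hmem, hp1⟩)]
      · have hval : ∀ x : ℝ, gaussianPDFReal 0 σ x = (Real.sqrt π)⁻¹ * Real.exp (-x ^ 2) := by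
          intro x
          rw [gaussianPDFReal]
          rw [show (2:ℝ) * π * (σ:ℝ) = π by rw [hσc]; ring,
            show (2:ℝ) * (σ:ℝ) = 1 by rw [hσc]; ring]
          norm_num
        simp only [hval, smul_eq_mul]
        have he : Real.exp (-(p.1 * Real.cos p.2) ^ 2) * Real.exp (-(p.1 * Real.sin p.2) ^ 2)
            = Real.exp (-p.1 ^ 2) := by
          rw [← Real.exp_add]; congr 1; nlinarith [Real.sin_sq_add_cos_sq p.2]
        have hπ : (Real.sqrt π)⁻¹ * (Real.sqrt π)⁻¹ = π⁻¹ := by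
          rw [← mul_inv, Real.mul_self_sqrt Real.pi_pos.le]
        calc p.1 * ((Real.sqrt π)⁻¹ * Real.exp (-(p.1 * Real.cos p.2) ^ 2)
              * ((Real.sqrt π)⁻¹ * Real.exp (-(p.1 * Real.sin p.2) ^ 2)))
            = p.1 * (((Real.sqrt π)⁻¹ * (Real.sqrt π)⁻¹)
              * (Real.exp (-(p.1 * Real.cos p.2) ^ 2) * Real.exp (-(p.1 * Real.sin p.2) ^ 2))) := by
              ring
          _ = p.1 * (π⁻¹ * Real.exp (-p.1 ^ 2)) * 1 := by rw [he, hπ]; ring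
      · show Real.sqrt _ ∈ A
        rw [hsq]; exact hmem
    · rw [Set.indicator_of_notMem, Set.indicator_of_notMem (fun hc => hmem hc.1)]
      · simp
      · show ¬ Real.sqrt _ ∈ A
        rw [hsq]; exact hmem
  rw [htarget, polarCoord_target, Measure.volume_eq_prod,
    setIntegral_prod_mul (fun r => Set.indicator (A ∩ Ioi 0) (fun r => r * (π⁻¹ * Real.exp (-r ^ 2))) r)
      (fun _ : ℝ => (1:ℝ))]
  rw [setIntegral_indicator (hA.inter measurableSet_Ioi),
    show Ioi (0:ℝ) ∩ (A ∩ Ioi 0) = A ∩ Ioi 0 by ext x; aesop]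
  rw [setIntegral_const, smul_eq_mul, mul_one, measureReal_def, Real.volume_Ioo,
    show π - -π = 2 * π by ring, ENNReal.toReal_ofReal (by positivity)]
  rw [← integral_mul_const]
  apply setIntegral_congr_fun (hA.inter measurableSet_Ioi)
  intro r _
  have hπ : (π : ℝ) ≠ 0 := Real.pi_ne_zero
  field_simp

lemma integrableOn_radial {b : ℝ} :
    IntegrableOn (fun r : ℝ => 2 * r * Real.exp (-r ^ 2)) (Set.Ioi b) := by
  have h : Integrable (fun r : ℝ => r * Real.exp (-(1:ℝ) * r ^ 2)) :=
    integrable_mul_exp_neg_mul_sq one_pos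
  have h2 := (h.const_mul 2).integrableOn (s := Set.Ioi b)
  refine h2.congr_fun (fun r _ => by norm_num; ring) measurableSet_Ioi

lemma hasDeriv_radial (r : ℝ) :
    HasDerivAt (fun r : ℝ => -Real.exp (-r ^ 2)) (2 * r * Real.exp (-r ^ 2)) r := by
  have h : HasDerivAt (fun r : ℝ => -r ^ 2) (-(2 * r)) r := by
    exact ((hasDerivAt_pow 2 r).neg).congr_deriv (by norm_num)
  have := (h.exp).neg
  exact this.congr_deriv (by ring)

lemma radial_Ioi {a : ℝ} : ∫ r in Set.Ioi a, 2 * r * Real.exp (-r ^ 2) = Real.exp (-a ^ 2) := by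
  have := integral_Ioi_of_hasDerivAt_of_tendsto
    (f := fun r : ℝ => -Real.exp (-r ^ 2)) (f' := fun r => 2 * r * Real.exp (-r ^ 2)) (a := a)
    (m := 0) (by exact (hasDeriv_radial a).continuousAt.continuousWithinAt)
    (fun x _ => hasDeriv_radial x) integrableOn_radial ?_
  · rw [this]; ring
  · rw [show (0:ℝ) = -0 by ring]
    apply Filter.Tendsto.neg
    have : Filter.Tendsto (fun r : ℝ => -r ^ 2) Filter.atTop Filter.atBot := by
      apply Filter.tendsto_neg_atBot_iff.mpr
      exact Filter.tendsto_pow_atTop (by norm_num)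
    exact Real.tendsto_exp_atBot.comp this

lemma ae_eq_Ioi_of_between {a : ℝ} (s : Set ℝ) (h1 : Set.Ioi a ⊆ s) (h2 : s ⊆ Set.Ici a) :
    s =ᵐ[volume] Set.Ioi a := by
  have : ∀ᵐ x : ℝ ∂volume, x ≠ a := by
    rw [MeasureTheory.ae_iff]
    simpa using Real.volume_singleton (a := a)
  rw [Filter.eventuallyEq_set]
  filter_upwards [this] with x hx
  constructor
  · intro hs
    rcases lt_or_eq_of_le (Set.mem_Ici.mp (h2 hs)) with h | h
    · exact h
    · exact absurd h.symm hx
  · exact fun h => h1 h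

lemma radial_Ici {a : ℝ} (ha : 0 ≤ a) :
    ∫ r in Set.Ici a ∩ Set.Ioi (0:ℝ), 2 * r * Real.exp (-r ^ 2) = Real.exp (-a ^ 2) := by
  rw [setIntegral_congr_set (ae_eq_Ioi_of_between _ ?_ ?_), radial_Ioi]
  · intro x hx
    exact ⟨Set.mem_Ici.mpr (le_of_lt (Set.mem_Ioi.mp hx)), Set.mem_Ioi.mpr (lt_of_le_of_lt ha (Set.mem_Ioi.mp hx))⟩
  · exact fun x hx => hx.1

lemma radial_Icc {b c : ℝ} (hb : 0 < b) (hbc : b ≤ c) :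
    ∫ r in Set.Icc b c ∩ Set.Ioi (0:ℝ), 2 * r * Real.exp (-r ^ 2)
      = Real.exp (-b ^ 2) - Real.exp (-c ^ 2) := by
  have hss : Set.Icc b c ∩ Set.Ioi (0:ℝ) = Set.Icc b c := by
    apply Set.inter_eq_self_of_subset_left
    exact fun x hx => lt_of_lt_of_le hb hx.1
  rw [hss, setIntegral_congr_set MeasureTheory.Ioc_ae_eq_Icc.symm,
    ← intervalIntegral.integral_of_le hbc,
    intervalIntegral.integral_eq_sub_of_hasDerivAt
      (fun x _ => hasDeriv_radial x)
      (Continuous.intervalIntegrable (by continuity) b c)]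
  ring

lemma complexGaussian_one_tail {a : ℝ} (ha : 0 ≤ a) :
    complexGaussian 1 {z : ℂ | a ≤ ‖z‖} = ENNReal.ofReal (Real.exp (-a ^ 2)) := by
  have := complexGaussian_one_radial (measurableSet_Ici (a := a))
  rw [radial_Ici ha] at this
  simpa using this

lemma complexGaussian_one_annulus {b c : ℝ} (hb : 0 < b) (hbc : b ≤ c) :
    complexGaussian 1 {z : ℂ | ‖z‖ ∈ Set.Icc b c}
      = ENNReal.ofReal (Real.exp (-b ^ 2) - Real.exp (-c ^ 2)) := by
  rw [complexGaussian_one_radial measurableSet_Icc, radial_Icc hb hbc]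

lemma complexGaussian_one_zero : complexGaussian 1 {(0:ℂ)} = 0 := by
  have hσ : ((1:ℝ) / 2).toNNReal ≠ 0 := by simp [Real.toNNReal_eq_zero]
  unfold complexGaussian
  rw [Measure.map_apply Complex.measurableEquivRealProd.symm.measurable
    (measurableSet_singleton _)]
  have hpre : ⇑Complex.measurableEquivRealProd.symm ⁻¹' {(0:ℂ)} = {((0:ℝ),(0:ℝ))} := by
    ext p
    simp only [mem_preimage, mem_singleton_iff]
    have hre : (Complex.measurableEquivRealProd.symm p).re = p.1 := rfl
    have him : (Complex.measurableEquivRealProd.symm p).im = p.2 := rfl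
    constructor
    · intro h
      have h1 : p.1 = 0 := by rw [← hre, h]; rfl
      have h2 : p.2 = 0 := by rw [← him, h]; rfl
      exact Prod.ext h1 h2
    · rintro rfl
      exact Complex.ext rfl rfl
  rw [hpre, show ({((0:ℝ),(0:ℝ))} : Set (ℝ × ℝ)) = {(0:ℝ)} ×ˢ {(0:ℝ)} by simp]
  rw [Measure.prod_prod]
  rw [gaussianReal_apply _ hσ]
  simp

lemma measurable_scale (N : ℝ) :
    Measurable (fun h : ℂ => ((Real.sqrt (N / ‖h‖ ^ 2) : ℝ) : ℂ)) :=
  Complex.measurable_ofReal.comp (Real.continuous_sqrt.measurable.comp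
    (Measurable.div measurable_const (continuous_norm.measurable.pow_const 2)))

lemma fadedNoisePair_apply (N : ℝ) (hN : 0 ≤ N) {S : Set (ℂ × ℂ)} (hS : MeasurableSet S) :
    fadedNoisePair N S
      = ∫⁻ h, complexGaussian 1
          ((fun n => (h, ((Real.sqrt (N / ‖h‖ ^ 2) : ℝ) : ℂ) * n)) ⁻¹' S)
          ∂(complexGaussian 1) := by
  have hGm : Measurable (fun q : ℂ × ℂ =>
      (q.1, ((Real.sqrt (N / ‖q.1‖ ^ 2) : ℝ) : ℂ) * q.2)) :=
    measurable_fst.prodMk (((measurable_scale N).comp measurable_fst).mul measurable_snd)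
  have hfun : (fun (h : ℂ) => (complexGaussian (N / ‖h‖ ^ 2)).map (fun n => (h, n)))
      = fun h => (complexGaussian 1).map
          (fun n => (h, ((Real.sqrt (N / ‖h‖ ^ 2) : ℝ) : ℂ) * n)) := by
    funext h
    rw [complexGaussian_eq_map _ (div_nonneg hN (by positivity)),
      Measure.map_map measurable_prodMk_left
        (show Measurable fun z : ℂ => ((Real.sqrt (N / ‖h‖ ^ 2) : ℝ) : ℂ) * z from
          measurable_id.const_mul _)]
    rfl
  have hmeas : Measurable (fun (h : ℂ) => (complexGaussian 1).map
      (fun n => (h, ((Real.sqrt (N / ‖h‖ ^ 2) : ℝ) : ℂ) * n))) := by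
    apply Measure.measurable_of_measurable_coe
    intro s hs
    have : (fun (h : ℂ) => (complexGaussian 1).map
        (fun n => (h, ((Real.sqrt (N / ‖h‖ ^ 2) : ℝ) : ℂ) * n)) s)
        = fun h => ∫⁻ n, s.indicator 1 (h, ((Real.sqrt (N / ‖h‖ ^ 2) : ℝ) : ℂ) * n)
            ∂(complexGaussian 1) := by
      funext h
      have hm : Measurable (fun n : ℂ => (h, ((Real.sqrt (N / ‖h‖ ^ 2) : ℝ) : ℂ) * n)) :=
        measurable_const.prodMk (measurable_id'.const_mul _)
      rw [Measure.map_apply hm hs, ← lintegral_indicator_one (hm hs)]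
      congr 1
    rw [this]
    apply Measurable.lintegral_prod_right
    exact (measurable_one.indicator hs).comp hGm
  unfold fadedNoisePair
  rw [hfun, Measure.bind_apply hS hmeas.aemeasurable]
  congr 1
  funext h
  rw [Measure.map_apply
    (show Measurable fun n : ℂ => (h, ((Real.sqrt (N / ‖h‖ ^ 2) : ℝ) : ℂ) * n) from
      measurable_const.prodMk (measurable_id.const_mul _)) hS]

lemma lintegral_exp_gaussianReal {k : ℝ} (hk : 0 ≤ k) :
    ∫⁻ x, ENNReal.ofReal (Real.exp (-(k * x ^ 2))) ∂(gaussianReal 0 ((1:ℝ)/2).toNNReal)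
      = ENNReal.ofReal ((Real.sqrt (1 + k))⁻¹) := by
  have hσ : ((1:ℝ) / 2).toNNReal ≠ 0 := by simp [Real.toNNReal_eq_zero]
  have hσc : (((1:ℝ)/2).toNNReal : ℝ) = 1 / 2 := Real.coe_toNNReal _ (by norm_num)
  rw [gaussianReal_of_var_ne_zero _ hσ,
    lintegral_withDensity_eq_lintegral_mul _ (measurable_gaussianPDF _ _)
      (show Measurable fun x : ℝ => ENNReal.ofReal (Real.exp (-(k * x ^ 2))) from
        ((measurable_id'.pow_const 2).const_mul k).neg.exp.ennreal_ofReal)]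
  have hval : ∀ x : ℝ, gaussianPDFReal 0 ((1:ℝ)/2).toNNReal x
      = (Real.sqrt π)⁻¹ * Real.exp (-x ^ 2) := by
    intro x
    rw [gaussianPDFReal]
    rw [show (2:ℝ) * π * ((((1:ℝ)/2).toNNReal : ℝ)) = π by rw [hσc]; ring,
      show (2:ℝ) * ((((1:ℝ)/2).toNNReal : ℝ)) = 1 by rw [hσc]; ring]
    norm_num
  have hpt : ∀ x : ℝ, (gaussianPDF 0 ((1:ℝ)/2).toNNReal
        * fun x => ENNReal.ofReal (Real.exp (-(k * x ^ 2)))) x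
      = ENNReal.ofReal ((Real.sqrt π)⁻¹ * Real.exp (-(1 + k) * x ^ 2)) := by
    intro x
    simp only [Pi.mul_apply, gaussianPDF, hval]
    rw [← ENNReal.ofReal_mul (by positivity)]
    congr 1
    rw [mul_assoc, ← Real.exp_add]
    congr 2
    ring
  simp_rw [hpt]
  rw [← ofReal_integral_eq_lintegral_ofReal
    ((integrable_exp_neg_mul_sq (by linarith : (0:ℝ) < 1 + k)).const_mul _)
    (ae_of_all _ fun x => by positivity)]
  rw [integral_const_mul, integral_gaussian]
  congr 1
  rw [Real.sqrt_div Real.pi_pos.le]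
  have hπ : Real.sqrt π ≠ 0 := by positivity
  field_simp

lemma lintegral_exp_neg_mul_sq_abs {k : ℝ} (hk : 0 ≤ k) :
    ∫⁻ h, ENNReal.ofReal (Real.exp (-(k * ‖h‖ ^ 2))) ∂(complexGaussian 1)
      = ENNReal.ofReal ((1 + k)⁻¹) := by
  unfold complexGaussian
  rw [lintegral_map
    (show Measurable fun h : ℂ => ENNReal.ofReal (Real.exp (-(k * ‖h‖ ^ 2))) from
      ((continuous_norm.measurable.pow_const 2).const_mul k).neg.exp.ennreal_ofReal)
    Complex.measurableEquivRealProd.symm.measurable]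
  have habs : ∀ p : ℝ × ℝ,
      ‖Complex.measurableEquivRealProd.symm p‖ ^ 2 = p.1 ^ 2 + p.2 ^ 2 := by
    intro p
    rw [Complex.sq_norm, Complex.normSq_apply]
    have h1 : (Complex.measurableEquivRealProd.symm p).re = p.1 := rfl
    have h2 : (Complex.measurableEquivRealProd.symm p).im = p.2 := rfl
    rw [h1, h2]; ring
  have hpt : ∀ p : ℝ × ℝ,
      ENNReal.ofReal (Real.exp (-(k * ‖Complex.measurableEquivRealProd.symm p‖ ^ 2)))
      = ENNReal.ofReal (Real.exp (-(k * p.1 ^ 2))) * ENNReal.ofReal (Real.exp (-(k * p.2 ^ 2))) := by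
    intro p
    rw [habs, ← ENNReal.ofReal_mul (by positivity), ← Real.exp_add]
    congr 2
    ring
  simp_rw [hpt]
  rw [lintegral_prod_mul (f := fun x => ENNReal.ofReal (Real.exp (-(k * x ^ 2))))
    (g := fun x => ENNReal.ofReal (Real.exp (-(k * x ^ 2))))
    ((((measurable_id.pow_const 2).const_mul k).neg.exp.ennreal_ofReal).aemeasurable)
    ((((measurable_id.pow_const 2).const_mul k).neg.exp.ennreal_ofReal).aemeasurable),
    lintegral_exp_gaussianReal hk,
    ← ENNReal.ofReal_mul (by positivity)]
  congr 1
  rw [← mul_inv, Real.mul_self_sqrt (by linarith)]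

lemma ae_ne_zero : ∀ᵐ h ∂(complexGaussian 1), h ≠ 0 := by
  rw [MeasureTheory.ae_iff]
  have : {x : ℂ | ¬ x ≠ 0} = {0} := by ext; simp
  rw [this]
  exact complexGaussian_one_zero

lemma term_tail (N a : ℝ) (hN : 0 < N) (ha : 0 < a) :
    fadedNoisePair N {p : ℂ × ℂ | a ≤ ‖p.2‖}
      = ENNReal.ofReal ((1 + a ^ 2 / N)⁻¹) := by
  have hS : MeasurableSet {p : ℂ × ℂ | a ≤ ‖p.2‖} :=
    measurableSet_le measurable_const (continuous_norm.measurable.comp measurable_snd)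
  rw [fadedNoisePair_apply N hN.le hS]
  have hae : (fun h => complexGaussian 1
        ((fun n => (h, ((Real.sqrt (N / ‖h‖ ^ 2) : ℝ) : ℂ) * n)) ⁻¹'
          {p : ℂ × ℂ | a ≤ ‖p.2‖}))
      =ᵐ[complexGaussian 1]
      (fun h => ENNReal.ofReal (Real.exp (-(a ^ 2 / N * ‖h‖ ^ 2)))) := by
    filter_upwards [ae_ne_zero] with h hh
    have ht : 0 < ‖h‖ ^ 2 := by
      have := norm_pos_iff.mpr hh
      positivity
    set w := Real.sqrt (N / ‖h‖ ^ 2) with hw_def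
    have hw : 0 < w := Real.sqrt_pos.mpr (div_pos hN ht)
    have hpre : (fun n : ℂ => (h, (w : ℂ) * n)) ⁻¹' {p : ℂ × ℂ | a ≤ ‖p.2‖}
        = {z : ℂ | a / w ≤ ‖z‖} := by
      ext n
      simp only [mem_preimage, mem_setOf_eq, norm_mul, Complex.norm_real, Real.norm_eq_abs, abs_of_pos hw]
      rw [div_le_iff₀ hw, mul_comm]
    rw [hpre, complexGaussian_one_tail (by positivity)]
    congr 2
    rw [div_pow, Real.sq_sqrt (div_nonneg hN.le ht.le)]
    field_simp
  rw [lintegral_congr_ae hae, lintegral_exp_neg_mul_sq_abs (by positivity)]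

lemma term_annulus (N b c : ℝ) (hN : 0 < N) (hb : 0 < b) (hbc : b ≤ c) :
    fadedNoisePair N {p : ℂ × ℂ | ‖p.2‖ ∈ Set.Icc b c}
      = ENNReal.ofReal ((1 + b ^ 2 / N)⁻¹) - ENNReal.ofReal ((1 + c ^ 2 / N)⁻¹) := by
  have hS : MeasurableSet {p : ℂ × ℂ | ‖p.2‖ ∈ Set.Icc b c} :=
    (continuous_norm.measurable.comp measurable_snd) measurableSet_Icc
  rw [fadedNoisePair_apply N hN.le hS]
  have hae : (fun h => complexGaussian 1
        ((fun n => (h, ((Real.sqrt (N / ‖h‖ ^ 2) : ℝ) : ℂ) * n)) ⁻¹'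
          {p : ℂ × ℂ | ‖p.2‖ ∈ Set.Icc b c}))
      =ᵐ[complexGaussian 1]
      (fun h => ENNReal.ofReal (Real.exp (-(b ^ 2 / N * ‖h‖ ^ 2)))
        - ENNReal.ofReal (Real.exp (-(c ^ 2 / N * ‖h‖ ^ 2)))) := by
    filter_upwards [ae_ne_zero] with h hh
    have ht : 0 < ‖h‖ ^ 2 := by
      have := norm_pos_iff.mpr hh
      positivity
    set w := Real.sqrt (N / ‖h‖ ^ 2) with hw_def
    have hw : 0 < w := Real.sqrt_pos.mpr (div_pos hN ht)
    have hpre : (fun n : ℂ => (h, (w : ℂ) * n)) ⁻¹'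
          {p : ℂ × ℂ | ‖p.2‖ ∈ Set.Icc b c}
        = {z : ℂ | ‖z‖ ∈ Set.Icc (b / w) (c / w)} := by
      ext n
      simp only [mem_preimage, mem_setOf_eq, norm_mul, Complex.norm_real, Real.norm_eq_abs, abs_of_pos hw,
        mem_Icc]
      rw [div_le_iff₀ hw, le_div_iff₀ hw, mul_comm (‖n‖) w]
    have hsq : ∀ x : ℝ, (x / w) ^ 2 = x ^ 2 / N * ‖h‖ ^ 2 := by
      intro x
      rw [div_pow, hw_def, Real.sq_sqrt (div_nonneg hN.le ht.le)]
      field_simp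
    rw [hpre, complexGaussian_one_annulus (by positivity)
      ((div_le_div_iff_of_pos_right hw).mpr hbc)]
    · rw [ENNReal.ofReal_sub _ (Real.exp_nonneg _), hsq, hsq]
  rw [lintegral_congr_ae hae]
  have hmb : Measurable fun h : ℂ =>
      ENNReal.ofReal (Real.exp (-(b ^ 2 / N * ‖h‖ ^ 2))) :=
    (((continuous_norm.measurable.pow_const 2).const_mul _).neg.exp.ennreal_ofReal)
  have hmc : Measurable fun h : ℂ =>
      ENNReal.ofReal (Real.exp (-(c ^ 2 / N * ‖h‖ ^ 2))) :=
    (((continuous_norm.measurable.pow_const 2).const_mul _).neg.exp.ennreal_ofReal)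
  rw [lintegral_sub hmc ?_ ?_]
  · rw [lintegral_exp_neg_mul_sq_abs (by positivity),
      lintegral_exp_neg_mul_sq_abs (by positivity)]
  · refine ne_top_of_le_ne_top (by simp : (1 : ℝ≥0∞) ≠ ⊤) ?_
    calc ∫⁻ h, ENNReal.ofReal (Real.exp (-(c ^ 2 / N * ‖h‖ ^ 2))) ∂(complexGaussian 1)
        ≤ ∫⁻ _, 1 ∂(complexGaussian 1) := by
          apply lintegral_mono
          intro h
          rw [show (1:ℝ≥0∞) = ENNReal.ofReal 1 by simp]
          apply ENNReal.ofReal_le_ofReal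
          rw [Real.exp_le_one_iff]
          have : 0 ≤ c ^ 2 / N * ‖h‖ ^ 2 := by positivity
          linarith
      _ = 1 := by simp
  · apply ae_of_all
    intro h
    apply ENNReal.ofReal_le_ofReal
    apply Real.exp_le_exp.mpr
    have hb2c2 : b ^ 2 ≤ c ^ 2 := by nlinarith
    have : 0 ≤ ‖h‖ ^ 2 := by positivity
    nlinarith [(div_le_div_iff_of_pos_right hN).mpr hb2c2]

/-- Proposition 3: the upper bound on the average false-alarm probability of
the instantaneous-energy detector.  With `h ~ CN(0,1)` and conditionally
`n' ~ CN(0, N/|h|²)`,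
`Pr(|n'| + 1 ≥ √(1+δ)) + Pr(|1 - |n'|| ≤ √(1-δ))
  = (1+(√(1+δ)-1)²/N)⁻¹ + (1+(1-√(1-δ))²/N)⁻¹ - (1+(√(1-δ)+1)²/N)⁻¹`. -/
theorem average_false_alarm_bound
    (N δ : ℝ) (hN : 0 < N) (hδ : δ ∈ Set.Ioo (0 : ℝ) 1)
    (hs : 1 < Real.sqrt (1 + δ)) :
    (fadedNoisePair N {p | Real.sqrt (1 + δ) ≤ ‖p.2‖ + 1}).toReal
      + (fadedNoisePair N {p | |1 - ‖p.2‖| ≤ Real.sqrt (1 - δ)}).toReal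
    = (1 + (Real.sqrt (1 + δ) - 1) ^ 2 / N)⁻¹
      + (1 + (1 - Real.sqrt (1 - δ)) ^ 2 / N)⁻¹
      - (1 + (Real.sqrt (1 - δ) + 1) ^ 2 / N)⁻¹ := by
  obtain ⟨hδ0, hδ1⟩ := hδ
  set s1 := Real.sqrt (1 + δ) with hs1def
  set s2 := Real.sqrt (1 - δ) with hs2def
  have hs2nn : 0 ≤ s2 := Real.sqrt_nonneg _
  have hs2lt : s2 < 1 := by
    nlinarith [Real.sq_sqrt (show (0:ℝ) ≤ 1 - δ by linarith)]
  have ha : 0 < s1 - 1 := by linarith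
  have hb : 0 < 1 - s2 := by linarith
  have hbc : 1 - s2 ≤ s2 + 1 := by linarith
  have hset1 : {p : ℂ × ℂ | s1 ≤ ‖p.2‖ + 1}
      = {p : ℂ × ℂ | s1 - 1 ≤ ‖p.2‖} := by
    ext p; simp only [mem_setOf_eq]; constructor <;> intro <;> linarith
  have hset2 : {p : ℂ × ℂ | |1 - ‖p.2‖| ≤ s2}
      = {p : ℂ × ℂ | ‖p.2‖ ∈ Set.Icc (1 - s2) (s2 + 1)} := by
    ext p
    simp only [mem_setOf_eq, abs_le, mem_Icc]
    constructor <;> intro h <;> constructor <;> linarith [h.1, h.2]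
  rw [hset1, hset2, term_tail N _ hN ha, term_annulus N _ _ hN hb hbc]
  have h1 : 0 ≤ (1 + (s1 - 1) ^ 2 / N)⁻¹ := by positivity
  have hyx : (1 + (s2 + 1) ^ 2 / N)⁻¹ ≤ (1 + (1 - s2) ^ 2 / N)⁻¹ := by
    apply inv_anti₀ (by positivity)
    have h2 : (1 - s2) ^ 2 ≤ (s2 + 1) ^ 2 := by nlinarith
    nlinarith [(div_le_div_iff_of_pos_right hN).mpr h2]
  rw [← ENNReal.ofReal_sub _ (by positivity)]
  rw [ENNReal.toReal_ofReal h1, ENNReal.toReal_ofReal (by linarith)]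
  ring
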